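/- Let L be a commutative semiring with 1 + 1 ≠ 1 and let G be a linearly ordered commutative monoid. If the operations defined on L × G as in R(L,G) satisfy the distributive law x·(y + z) = x·y + x·z for all x, y, z ∈ L × G, then G is cancellative: ab = ac implies b = c for all a, b, c ∈ G. -/

import Mathlib

/-- Addition of the layered semiring `R(L,G)` on `L × G`. -/
def ladd {L G : Type*} [Add L] [LinearOrder G] (x y : L × G) : L × G :=
  if x.2 < y.2 then y else if y.2 < x.2 then x else (x.1 + y.1, x.2)

/-- Multiplication of the layered semiring `R(L,G)` on `L × G` (componentwise). -/
def lmul {L G : Type*} [Mul L] [Mul G] (x y : L × G) : L × G :=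
  (x.1 * y.1, x.2 * y.2)

/-- If `1 + 1 ≠ 1` in the commutative semiring `L` and the operations of
`R(L,G)` on `L × G` satisfy the distributive law, then the linearly ordered commutative
monoid `G` is cancellative. -/
theorem stmt4 {L : Type*} [CommSemiring L] (h11 : (1 : L) + 1 ≠ 1)
    {G : Type*} [CommMonoid G] [LinearOrder G] [IsOrderedMonoid G]
    (hdistrib : ∀ x y z : L × G, lmul x (ladd y z) = ladd (lmul x y) (lmul x z)) :
    ∀ a b c : G, a * b = a * c → b = c := by
  intro a b c hac
  by_contra hbc
  have key : ∀ b c : G, b < c → a * b = a * c → False := by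
    intro b c hlt heq
    have := hdistrib ((1 : L), a) ((1 : L), b) ((1 : L), c)
    simp [ladd, lmul, hlt, heq, lt_irrefl] at this
    exact h11 this.symm
  rcases lt_trichotomy b c with h | h | h
  · exact key b c h hac
  · exact hbc h
  · exact key c b h hac.symm
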